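/- Let ρ, u be C² fields on ℝ₊ × ℝ² with ∂_t ρ + u·∇ρ = 0, div u = 0, and set X := ∇^⊥ρ. Then for every C² function f on ℝ₊ × ℝ², the commutator [∂_X, ∂_t + u·∇] f = 0, i.e. ∂_X(∂_t f + u·∇f) = (∂_t + u·∇)(∂_X f). -/

import Mathlib

/-- Time derivative ∂_t. -/
noncomputable def pt (f : ℝ → ℝ → ℝ → ℝ) (t x y : ℝ) : ℝ := deriv (fun s => f s x y) t
/-- Spatial derivative ∂₁. -/
noncomputable def p1 (f : ℝ → ℝ → ℝ → ℝ) (t x y : ℝ) : ℝ := deriv (fun s => f t s y) x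
/-- Spatial derivative ∂₂. -/
noncomputable def p2 (f : ℝ → ℝ → ℝ → ℝ) (t x y : ℝ) : ℝ := deriv (fun s => f t x s) y

namespace Stmt13Aux
abbrev E3 : Type := ℝ × ℝ × ℝ
noncomputable def dd (Φ : E3 → ℝ) (v : E3) (q : E3) : ℝ := fderiv ℝ Φ q v
def et : E3 := (1,0,0)
def ex : E3 := (0,1,0)
def ey : E3 := (0,0,1)

lemma pt_eq {g : ℝ → ℝ → ℝ → ℝ} {Φ : E3 → ℝ} (hg : ∀ a b c, g a b c = Φ (a,b,c))
    (hΦ : Differentiable ℝ Φ) (a b c : ℝ) : pt g a b c = dd Φ et (a,b,c) := by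
  have h : HasDerivAt (fun s => Φ (s,b,c)) (fderiv ℝ Φ (a,b,c) et) a :=
    (hΦ (a,b,c)).hasFDerivAt.comp_hasDerivAt a
      (HasDerivAt.prodMk (hasDerivAt_id a) (HasDerivAt.prodMk (hasDerivAt_const a b) (hasDerivAt_const a c)))
  rw [pt, show (fun s => g s b c) = fun s => Φ (s,b,c) from funext fun s => hg s b c]
  exact h.deriv

lemma p1_eq {g : ℝ → ℝ → ℝ → ℝ} {Φ : E3 → ℝ} (hg : ∀ a b c, g a b c = Φ (a,b,c))
    (hΦ : Differentiable ℝ Φ) (a b c : ℝ) : p1 g a b c = dd Φ ex (a,b,c) := by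
  have h : HasDerivAt (fun s => Φ (a,s,c)) (fderiv ℝ Φ (a,b,c) ex) b :=
    (hΦ (a,b,c)).hasFDerivAt.comp_hasDerivAt b
      (HasDerivAt.prodMk (hasDerivAt_const b a) (HasDerivAt.prodMk (hasDerivAt_id b) (hasDerivAt_const b c)))
  rw [p1, show (fun s => g a s c) = fun s => Φ (a,s,c) from funext fun s => hg a s c]
  exact h.deriv

lemma p2_eq {g : ℝ → ℝ → ℝ → ℝ} {Φ : E3 → ℝ} (hg : ∀ a b c, g a b c = Φ (a,b,c))
    (hΦ : Differentiable ℝ Φ) (a b c : ℝ) : p2 g a b c = dd Φ ey (a,b,c) := by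
  have h : HasDerivAt (fun s => Φ (a,b,s)) (fderiv ℝ Φ (a,b,c) ey) c :=
    (hΦ (a,b,c)).hasFDerivAt.comp_hasDerivAt c
      (HasDerivAt.prodMk (hasDerivAt_const c a) (HasDerivAt.prodMk (hasDerivAt_const c b) (hasDerivAt_id c)))
  rw [p2, show (fun s => g a b s) = fun s => Φ (a,b,s) from funext fun s => hg a b s]
  exact h.deriv

lemma fderiv3_apply (a g1 b1 g2 b2 : E3 → ℝ) (ha : Differentiable ℝ a)
    (hg1 : Differentiable ℝ g1) (hb1 : Differentiable ℝ b1)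
    (hg2 : Differentiable ℝ g2) (hb2 : Differentiable ℝ b2) (p w : E3) :
    fderiv ℝ (fun q => a q + g1 q * b1 q + g2 q * b2 q) p w =
      fderiv ℝ a p w + (fderiv ℝ g1 p w * b1 p + g1 p * fderiv ℝ b1 p w)
        + (fderiv ℝ g2 p w * b2 p + g2 p * fderiv ℝ b2 p w) := by
  have h : HasFDerivAt (fun q => a q + g1 q * b1 q + g2 q * b2 q)
      ((fderiv ℝ a p + (g1 p • fderiv ℝ b1 p + b1 p • fderiv ℝ g1 p))
        + (g2 p • fderiv ℝ b2 p + b2 p • fderiv ℝ g2 p)) p :=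
    (((ha p).hasFDerivAt.add ((hg1 p).hasFDerivAt.mul (hb1 p).hasFDerivAt))).add
      ((hg2 p).hasFDerivAt.mul (hb2 p).hasFDerivAt)
  rw [h.fderiv]
  simp only [ContinuousLinearMap.add_apply, ContinuousLinearMap.coe_smul',
    Pi.smul_apply, smul_eq_mul]
  ring

lemma fderiv_sub2_apply (g1 b1 g2 b2 : E3 → ℝ)
    (hg1 : Differentiable ℝ g1) (hb1 : Differentiable ℝ b1)
    (hg2 : Differentiable ℝ g2) (hb2 : Differentiable ℝ b2) (p w : E3) :
    fderiv ℝ (fun q => g1 q * b1 q - g2 q * b2 q) p w =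
      (fderiv ℝ g1 p w * b1 p + g1 p * fderiv ℝ b1 p w)
        - (fderiv ℝ g2 p w * b2 p + g2 p * fderiv ℝ b2 p w) := by
  have h : HasFDerivAt (fun q => g1 q * b1 q - g2 q * b2 q)
      ((g1 p • fderiv ℝ b1 p + b1 p • fderiv ℝ g1 p)
        - (g2 p • fderiv ℝ b2 p + b2 p • fderiv ℝ g2 p)) p :=
    ((hg1 p).hasFDerivAt.mul (hb1 p).hasFDerivAt).sub
      ((hg2 p).hasFDerivAt.mul (hb2 p).hasFDerivAt)
  rw [h.fderiv]
  simp only [ContinuousLinearMap.sub_apply, ContinuousLinearMap.add_apply,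
    ContinuousLinearMap.coe_smul', Pi.smul_apply, smul_eq_mul]
  ring


lemma contDiff_dd {Φ : E3 → ℝ} (hΦ : ContDiff ℝ 2 Φ) (v : E3) : ContDiff ℝ 1 (dd Φ v) :=
  (hΦ.fderiv_right (by norm_num)).clm_apply contDiff_const

lemma fderiv_dd {Φ : E3 → ℝ} (hΦ : ContDiff ℝ 2 Φ) (v w p : E3) :
    fderiv ℝ (dd Φ v) p w = fderiv ℝ (fderiv ℝ Φ) p w v := by
  have h1 : DifferentiableAt ℝ (fderiv ℝ Φ) p :=
    ((hΦ.fderiv_right (m := 1) (by norm_num)).differentiable one_ne_zero) p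
  have h2 : HasFDerivAt (dd Φ v)
      ((ContinuousLinearMap.apply ℝ ℝ v).comp (fderiv ℝ (fderiv ℝ Φ) p)) p :=
    ((ContinuousLinearMap.apply ℝ ℝ v).hasFDerivAt).comp p h1.hasFDerivAt
  rw [h2.fderiv]; rfl

lemma dd_symm {Φ : E3 → ℝ} (hΦ : ContDiff ℝ 2 Φ) (v w p : E3) :
    fderiv ℝ (dd Φ v) p w = fderiv ℝ (dd Φ w) p v := by
  rw [fderiv_dd hΦ, fderiv_dd hΦ]
  exact (hΦ.contDiffAt.isSymmSndFDerivAt (by simp)) w v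
lemma key (F R U1 U2 : E3 → ℝ)
    (hF : ContDiff ℝ 2 F) (hR : ContDiff ℝ 2 R)
    (hU1 : ContDiff ℝ 2 U1) (hU2 : ContDiff ℝ 2 U2)
    (hdiv : ∀ q, fderiv ℝ U1 q ex + fderiv ℝ U2 q ey = 0)
    (htr : ∀ q, dd R et q + U1 q * dd R ex q + U2 q * dd R ey q = 0)
    (p : E3) :
    (-(dd R ey p)) * fderiv ℝ (fun q => dd F et q + U1 q * dd F ex q + U2 q * dd F ey q) p ex
    + dd R ex p * fderiv ℝ (fun q => dd F et q + U1 q * dd F ex q + U2 q * dd F ey q) p ey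
    = fderiv ℝ (fun q => dd R ex q * dd F ey q - dd R ey q * dd F ex q) p et
    + U1 p * fderiv ℝ (fun q => dd R ex q * dd F ey q - dd R ey q * dd F ex q) p ex
    + U2 p * fderiv ℝ (fun q => dd R ex q * dd F ey q - dd R ey q * dd F ex q) p ey := by
  have hFd : ∀ v, Differentiable ℝ (dd F v) := fun v => (contDiff_dd hF v).differentiable one_ne_zero
  have hRd : ∀ v, Differentiable ℝ (dd R v) := fun v => (contDiff_dd hR v).differentiable one_ne_zero
  have hU1d : Differentiable ℝ U1 := hU1.differentiable two_ne_zero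
  have hU2d : Differentiable ℝ U2 := hU2.differentiable two_ne_zero
  have hE := fun w => fderiv3_apply (dd F et) U1 (dd F ex) U2 (dd F ey)
    (hFd et) hU1d (hFd ex) hU2d (hFd ey) p w
  have hG := fun w => fderiv_sub2_apply (dd R ex) (dd F ey) (dd R ey) (dd F ex)
    (hRd ex) (hFd ey) (hRd ey) (hFd ex) p w
  have hT0 : (fun q => dd R et q + U1 q * dd R ex q + U2 q * dd R ey q) = fun _ => (0:ℝ) :=
    funext htr
  have hT : ∀ w, fderiv ℝ (fun q => dd R et q + U1 q * dd R ex q + U2 q * dd R ey q) p w = 0 := by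
    intro w; rw [hT0]; simp
  have T1 : fderiv ℝ (dd R et) p ex + (fderiv ℝ U1 p ex * dd R ex p + U1 p * fderiv ℝ (dd R ex) p ex)
      + (fderiv ℝ U2 p ex * dd R ey p + U2 p * fderiv ℝ (dd R ey) p ex) = 0 := by
    rw [← fderiv3_apply (dd R et) U1 (dd R ex) U2 (dd R ey)
      (hRd et) hU1d (hRd ex) hU2d (hRd ey) p ex]
    exact hT ex
  have T2 : fderiv ℝ (dd R et) p ey + (fderiv ℝ U1 p ey * dd R ex p + U1 p * fderiv ℝ (dd R ex) p ey)
      + (fderiv ℝ U2 p ey * dd R ey p + U2 p * fderiv ℝ (dd R ey) p ey) = 0 := by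
    rw [← fderiv3_apply (dd R et) U1 (dd R ex) U2 (dd R ey)
      (hRd et) hU1d (hRd ex) hU2d (hRd ey) p ey]
    exact hT ey
  rw [hE ex, hE ey, hG et, hG ex, hG ey]
  rw [dd_symm hF ey ex p, dd_symm hF ex et p, dd_symm hF ey et p,
      dd_symm hR ex et p, dd_symm hR ey et p, dd_symm hR ey ex p]
  rw [dd_symm hR ey ex p] at T1
  linear_combination (dd F ex p) * T2 - (dd F ey p) * T1
    + (dd R ex p * dd F ey p - dd R ey p * dd F ex p) * (hdiv p)
end Stmt13Aux

open Stmt13Aux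

/-- If ρ is transported by a divergence-free C² field u in 2-D and X = ∇^⊥ρ, then
the operators ∂_X and ∂_t + u·∇ commute on C² functions f. -/
theorem stmt13 (ρ u1 u2 f : ℝ → ℝ → ℝ → ℝ)
    (hρ : ContDiff ℝ 2 (fun p : ℝ × ℝ × ℝ => ρ p.1 p.2.1 p.2.2))
    (hu1 : ContDiff ℝ 2 (fun p : ℝ × ℝ × ℝ => u1 p.1 p.2.1 p.2.2))
    (hu2 : ContDiff ℝ 2 (fun p : ℝ × ℝ × ℝ => u2 p.1 p.2.1 p.2.2))
    (hf : ContDiff ℝ 2 (fun p : ℝ × ℝ × ℝ => f p.1 p.2.1 p.2.2))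
    (hdiv : ∀ t x y, p1 u1 t x y + p2 u2 t x y = 0)
    (htrans : ∀ t x y,
      pt ρ t x y + u1 t x y * p1 ρ t x y + u2 t x y * p2 ρ t x y = 0)
    (X1 X2 : ℝ → ℝ → ℝ → ℝ)
    (hX1 : ∀ t x y, X1 t x y = -(p2 ρ t x y))
    (hX2 : ∀ t x y, X2 t x y = p1 ρ t x y) :
    ∀ t x y, 0 ≤ t →
      X1 t x y * p1 (fun t a b => pt f t a b + u1 t a b * p1 f t a b + u2 t a b * p2 f t a b) t x y +
      X2 t x y * p2 (fun t a b => pt f t a b + u1 t a b * p1 f t a b + u2 t a b * p2 f t a b) t x y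
      =
      pt (fun t a b => X1 t a b * p1 f t a b + X2 t a b * p2 f t a b) t x y +
      u1 t x y * p1 (fun t a b => X1 t a b * p1 f t a b + X2 t a b * p2 f t a b) t x y +
      u2 t x y * p2 (fun t a b => X1 t a b * p1 f t a b + X2 t a b * p2 f t a b) t x y := by
  intro t x y _
  set F : E3 → ℝ := fun q => f q.1 q.2.1 q.2.2 with hFdef
  set R : E3 → ℝ := fun q => ρ q.1 q.2.1 q.2.2 with hRdef
  set U1 : E3 → ℝ := fun q => u1 q.1 q.2.1 q.2.2 with hU1def
  set U2 : E3 → ℝ := fun q => u2 q.1 q.2.1 q.2.2 with hU2def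
  have hFd : Differentiable ℝ F := hf.differentiable two_ne_zero
  have hRd : Differentiable ℝ R := hρ.differentiable two_ne_zero
  have hU1d : Differentiable ℝ U1 := hu1.differentiable two_ne_zero
  have hU2d : Differentiable ℝ U2 := hu2.differentiable two_ne_zero
  have hddF : ∀ v, Differentiable ℝ (dd F v) := fun v => (contDiff_dd hf v).differentiable one_ne_zero
  have hddR : ∀ v, Differentiable ℝ (dd R v) := fun v => (contDiff_dd hρ v).differentiable one_ne_zero
  -- conversion of hypotheses
  have hdiv' : ∀ q : E3, fderiv ℝ U1 q ex + fderiv ℝ U2 q ey = 0 := by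
    rintro ⟨a, b, c⟩
    have h := hdiv a b c
    rw [p1_eq (g := u1) (Φ := U1) (fun _ _ _ => rfl) hU1d,
        p2_eq (g := u2) (Φ := U2) (fun _ _ _ => rfl) hU2d] at h
    exact h
  have htr' : ∀ q : E3, dd R et q + U1 q * dd R ex q + U2 q * dd R ey q = 0 := by
    rintro ⟨a, b, c⟩
    have h := htrans a b c
    rw [pt_eq (g := ρ) (Φ := R) (fun _ _ _ => rfl) hRd,
        p1_eq (g := ρ) (Φ := R) (fun _ _ _ => rfl) hRd,
        p2_eq (g := ρ) (Φ := R) (fun _ _ _ => rfl) hRd] at h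
    exact h
  -- pointwise identification of the inner functions
  have hLf : ∀ a b c, (fun t a b => pt f t a b + u1 t a b * p1 f t a b + u2 t a b * p2 f t a b) a b c
      = (fun q => dd F et q + U1 q * dd F ex q + U2 q * dd F ey q) (a, b, c) := by
    intro a b c
    show pt f a b c + u1 a b c * p1 f a b c + u2 a b c * p2 f a b c = _
    rw [pt_eq (g := f) (Φ := F) (fun _ _ _ => rfl) hFd,
        p1_eq (g := f) (Φ := F) (fun _ _ _ => rfl) hFd,
        p2_eq (g := f) (Φ := F) (fun _ _ _ => rfl) hFd]
  have hLg : ∀ a b c, (fun t a b => X1 t a b * p1 f t a b + X2 t a b * p2 f t a b) a b c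
      = (fun q => dd R ex q * dd F ey q - dd R ey q * dd F ex q) (a, b, c) := by
    intro a b c
    show X1 a b c * p1 f a b c + X2 a b c * p2 f a b c = _
    rw [hX1, hX2,
        p1_eq (g := ρ) (Φ := R) (fun _ _ _ => rfl) hRd,
        p2_eq (g := ρ) (Φ := R) (fun _ _ _ => rfl) hRd,
        p1_eq (g := f) (Φ := F) (fun _ _ _ => rfl) hFd,
        p2_eq (g := f) (Φ := F) (fun _ _ _ => rfl) hFd]
    show -(dd R ey (a,b,c)) * dd F ex (a,b,c) + dd R ex (a,b,c) * dd F ey (a,b,c) = _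
    ring
  have hΦfd : Differentiable ℝ (fun q => dd F et q + U1 q * dd F ex q + U2 q * dd F ey q) :=
    ((hddF et).add (hU1d.mul (hddF ex))).add (hU2d.mul (hddF ey))
  have hΦgd : Differentiable ℝ (fun q => dd R ex q * dd F ey q - dd R ey q * dd F ex q) :=
    ((hddR ex).mul (hddF ey)).sub ((hddR ey).mul (hddF ex))
  have hkey := key F R U1 U2 hf hρ hu1 hu2 hdiv' htr' (t, x, y)
  rw [hX1, hX2,
      p1_eq hLf hΦfd t x y, p2_eq hLf hΦfd t x y,
      pt_eq hLg hΦgd t x y, p1_eq hLg hΦgd t x y, p2_eq hLg hΦgd t x y,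
      p1_eq (g := ρ) (Φ := R) (fun _ _ _ => rfl) hRd,
      p2_eq (g := ρ) (Φ := R) (fun _ _ _ => rfl) hRd]
  exact hkey
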